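/- Let f(x,y) = |x| + max(1−y, 0) − 1 and F(W_1, W_2) = f(W_2 W_1) for W_1 ∈ ℝ and W_2 ∈ ℝ². Then the point Ŵ_1 = 0, Ŵ_2 = (1,0)ᵀ is a local minimizer of F which is not a global minimizer: F(Ŵ_1, Ŵ_2) = 0 > −1 = inf F. -/

import Mathlib

open Matrix


/-- The bivariate function `f(x,y) = |x| + max(1−y, 0) − 1` from the counterexample. -/
noncomputable def fc (p : ℝ × ℝ) : ℝ := |p.1| + max (1 - p.2) 0 - 1

/-- Euclidean norm on `ℝ²`. -/
noncomputable def enorm₂ (p : ℝ × ℝ) : ℝ := Real.sqrt (p.1^2 + p.2^2)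

lemma enorm_coord (p : ℝ × ℝ) : |p.1| ≤ enorm₂ p ∧ |p.2| ≤ enorm₂ p := by
  constructor
  · rw [show |p.1| = Real.sqrt (p.1^2) by rw [Real.sqrt_sq_eq_abs]]
    exact Real.sqrt_le_sqrt (by nlinarith [sq_nonneg p.2])
  · rw [show |p.2| = Real.sqrt (p.2^2) by rw [Real.sqrt_sq_eq_abs]]
    exact Real.sqrt_le_sqrt (by nlinarith [sq_nonneg p.1])

/-- For `F(W₁, W₂) = f(W₂ W₁)` with `W₁ ∈ ℝ`, `W₂ ∈ ℝ²` and `f` from the counterexample,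
the point `Ŵ₁ = 0`, `Ŵ₂ = (1,0)ᵀ` is a local minimizer of `F` which is not global:
`F(Ŵ₁,Ŵ₂) = 0 > −1 = inf F`. -/
theorem stmt11 :
    (∃ r > (0:ℝ), ∀ (W₁ : ℝ) (W₂ : ℝ × ℝ),
      |W₁ - 0| ≤ r → enorm₂ (W₂ - (1, 0)) ≤ r →
      fc (W₁ • W₂) ≥ fc ((0:ℝ) • ((1:ℝ), (0:ℝ)))) ∧
    fc ((0:ℝ) • ((1:ℝ), (0:ℝ))) = 0 ∧
    (∀ (W₁ : ℝ) (W₂ : ℝ × ℝ), -1 ≤ fc (W₁ • W₂)) ∧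
    (∃ (W₁ : ℝ) (W₂ : ℝ × ℝ), fc (W₁ • W₂) = -1) := by
  have hval : fc ((0:ℝ) • ((1:ℝ), (0:ℝ))) = 0 := by
    simp [fc]
  refine ⟨⟨1/2, by norm_num, ?_⟩, hval, ?_, ?_⟩
  · intro W₁ W₂ h1 h2
    obtain ⟨ha, hb⟩ := enorm_coord (W₂ - (1, 0))
    simp only [Prod.fst_sub, Prod.snd_sub] at ha hb
    have ha' : |W₂.1 - 1| ≤ 1/2 := le_trans ha h2
    have hb' : |W₂.2 - 0| ≤ 1/2 := le_trans hb h2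
    rw [hval]
    have h1' : |W₁| ≤ 1/2 := by simpa using h1
    simp only [fc, Prod.smul_fst, Prod.smul_snd, smul_eq_mul]
    have key : |W₁ * W₂.1| - W₁ * W₂.2 ≥ 0 := by
      rw [abs_mul]
      have hA : |W₂.1| ≥ 1/2 := by
        cases abs_le.mp ha' with
        | intro l r => rw [abs_of_nonneg (by linarith)]; linarith
      have hB : W₁ * W₂.2 ≤ |W₁| * |W₂.2| := le_trans (le_abs_self _) (by rw [abs_mul])
      have hB2 : |W₂.2| ≤ 1/2 := by simpa using hb'
      nlinarith [abs_nonneg W₁, abs_nonneg W₂.2]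
    have : max (1 - W₁ * W₂.2) 0 ≥ 1 - W₁ * W₂.2 := le_max_left _ _
    linarith
  · intro W₁ W₂
    simp only [fc]
    have := abs_nonneg (W₁ • W₂).1
    have := le_max_right (1 - (W₁ • W₂).2) 0
    linarith
  · exact ⟨1, (0, 1), by norm_num [fc]⟩
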